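/- Let L : U → ℝ be a C¹ function on a connected open set U ⊆ ℝ², with coordinates (S,P). If the vector field v(S,P) = (S·L_P − P·L_S, S·L_S + P·L_P) vanishes identically on U, then L is constant on U. -/

import Mathlib

open Topology Filter


/-- If the duality-rotation vector field built from a C¹ Lagrangian vanishes
identically on a connected open set, the Lagrangian is constant there. -/
theorem lagrangian_constant_of_vector_field_zero (L : ℝ → ℝ → ℝ) (U : Set (ℝ × ℝ))
    (hU : IsOpen U) (hconn : IsConnected U)
    (hL : ContDiffOn ℝ 1 (fun p : ℝ × ℝ => L p.1 p.2) U)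
    (hv1 : ∀ p ∈ U,
      p.1 * deriv (fun t => L p.1 t) p.2 - p.2 * deriv (fun s => L s p.2) p.1 = 0)
    (hv2 : ∀ p ∈ U,
      p.1 * deriv (fun s => L s p.2) p.1 + p.2 * deriv (fun t => L p.1 t) p.2 = 0) :
    ∀ p ∈ U, ∀ q ∈ U, L p.1 p.2 = L q.1 q.2 := by
  set F : ℝ × ℝ → ℝ := fun p => L p.1 p.2 with hF
  have hdiff : DifferentiableOn ℝ F U := hL.differentiableOn one_ne_zero
  have hdAt : ∀ p ∈ U, DifferentiableAt ℝ F p := fun p hp =>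
    hdiff.differentiableAt (hU.mem_nhds hp)
  -- partial derivatives as values of fderiv
  have hpart : ∀ p ∈ U,
      deriv (fun s => L s p.2) p.1 = fderiv ℝ F p (1, 0) ∧
      deriv (fun t => L p.1 t) p.2 = fderiv ℝ F p (0, 1) := by
    intro p hp
    have hFd := (hdAt p hp).hasFDerivAt
    constructor
    · have h1 : HasDerivAt (fun s : ℝ => (s, p.2)) ((1 : ℝ), (0 : ℝ)) p.1 :=
        HasDerivAt.prodMk (hasDerivAt_id p.1) (hasDerivAt_const _ _)
      have := hFd.comp_hasDerivAt p.1 h1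
      exact this.deriv
    · have h1 : HasDerivAt (fun t : ℝ => (p.1, t)) ((0 : ℝ), (1 : ℝ)) p.2 :=
        HasDerivAt.prodMk (hasDerivAt_const _ _) (hasDerivAt_id p.2)
      have := hFd.comp_hasDerivAt p.2 h1
      exact this.deriv
  have zero_map : ∀ p ∈ U, fderiv ℝ F p (1, 0) = 0 ∧ fderiv ℝ F p (0, 1) = 0 →
      fderiv ℝ F p = 0 := by
    intro p _ ⟨ha, hb⟩
    apply ContinuousLinearMap.ext
    intro x
    have hx : x = x.1 • ((1 : ℝ), (0 : ℝ)) + x.2 • ((0 : ℝ), (1 : ℝ)) := by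
      ext <;> simp
    rw [hx, map_add, map_smul, map_smul, ha, hb]
    simp
  have key0 : ∀ p ∈ U, p ≠ (0, 0) → fderiv ℝ F p = 0 := by
    intro p hp hp0
    obtain ⟨h1, h2⟩ := hpart p hp
    set a := fderiv ℝ F p (1, 0)
    set b := fderiv ℝ F p (0, 1)
    have e1 := hv1 p hp
    have e2 := hv2 p hp
    rw [h1, h2] at e1 e2
    have hpos : 0 < p.1 ^ 2 + p.2 ^ 2 := by
      have : p.1 ≠ 0 ∨ p.2 ≠ 0 := by
        by_contra hc
        push_neg at hc
        exact hp0 (Prod.ext hc.1 hc.2)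
      rcases this with h | h <;> positivity
    have ha : a = 0 := by
      have h : a * (p.1 ^ 2 + p.2 ^ 2) = 0 := by linear_combination p.1 * e2 - p.2 * e1
      rcases mul_eq_zero.1 h with h | h
      · exact h
      · exact absurd h hpos.ne'
    have hb : b = 0 := by
      have h : b * (p.1 ^ 2 + p.2 ^ 2) = 0 := by linear_combination p.2 * e2 + p.1 * e1
      rcases mul_eq_zero.1 h with h | h
      · exact h
      · exact absurd h hpos.ne'
    exact zero_map p hp ⟨ha, hb⟩
  have key : ∀ p ∈ U, fderiv ℝ F p = 0 := by
    intro p hp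
    by_cases hp0 : p = (0, 0)
    · -- use continuity of the derivative
      have hcont : ContinuousOn (fderiv ℝ F) U :=
        hL.continuousOn_fderiv_of_isOpen hU le_rfl
      have hU' : U ∈ 𝓝 p := hU.mem_nhds hp
      have hne : Filter.NeBot (𝓝[U \ {p}] p) := by
        have : 𝓝[U \ {p}] p = 𝓝[{p}ᶜ] p := by
          rw [Set.diff_eq, Set.inter_comm, nhdsWithin_inter_of_mem']
          exact nhdsWithin_le_nhds hU'
        rw [this]
        exact Module.punctured_nhds_neBot ℝ (ℝ × ℝ) p
      have ht1 : Filter.Tendsto (fderiv ℝ F) (𝓝[U \ {p}] p) (𝓝 (fderiv ℝ F p)) :=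
        ((hcont p hp).mono Set.diff_subset)
      have ht2 : Filter.Tendsto (fderiv ℝ F) (𝓝[U \ {p}] p) (𝓝 0) := by
        apply Filter.Tendsto.congr' _ tendsto_const_nhds
        filter_upwards [self_mem_nhdsWithin] with q hq
        exact (key0 q hq.1 (by simpa [hp0] using hq.2)).symm
      exact tendsto_nhds_unique ht1 ht2
    · exact key0 p hp hp0
  -- local constancy
  have hloc : ∀ q ∈ U, ∃ ε > 0, Metric.ball q ε ⊆ U ∧
      ∀ x ∈ Metric.ball q ε, F x = F q := by
    intro q hq
    obtain ⟨ε, hε, hball⟩ := Metric.isOpen_iff.1 hU q hq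
    refine ⟨ε, hε, hball, fun x hx => ?_⟩
    refine (convex_ball q ε).is_const_of_fderivWithin_eq_zero
      (hdiff.mono hball) (fun z hz => ?_) hx (Metric.mem_ball_self hε)
    rw [fderivWithin_of_isOpen Metric.isOpen_ball hz]
    exact key z (hball hz)
  intro p hp q hq
  -- connectedness argument
  set T : Set (ℝ × ℝ) := {x | x ∈ U ∧ F x = F p} with hT
  set V : Set (ℝ × ℝ) := {x | x ∈ U ∧ F x ≠ F p} with hV
  have hTopen : IsOpen T := by
    rw [isOpen_iff_mem_nhds]
    rintro x ⟨hxU, hxF⟩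
    obtain ⟨ε, hε, hball, hconst⟩ := hloc x hxU
    exact Filter.mem_of_superset (Metric.ball_mem_nhds x hε)
      (fun y hy => ⟨hball hy, by rw [hconst y hy, hxF]⟩)
  have hVopen : IsOpen V := by
    rw [isOpen_iff_mem_nhds]
    rintro x ⟨hxU, hxF⟩
    obtain ⟨ε, hε, hball, hconst⟩ := hloc x hxU
    exact Filter.mem_of_superset (Metric.ball_mem_nhds x hε)
      (fun y hy => ⟨hball hy, by rw [hconst y hy]; exact hxF⟩)
  have hqT : q ∈ T := by
    by_contra hqT
    have hqV : q ∈ V := ⟨hq, fun h => hqT ⟨hq, h⟩⟩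
    have := hconn.isPreconnected T V hTopen hVopen
      (fun x hx => by
        by_cases h : F x = F p
        · exact Or.inl ⟨hx, h⟩
        · exact Or.inr ⟨hx, h⟩)
      ⟨p, hp, ⟨hp, rfl⟩⟩ ⟨q, hq, hqV⟩
    obtain ⟨x, _, ⟨_, h1⟩, ⟨_, h2⟩⟩ := this
    exact h2 h1
  exact hqT.2.symm
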